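/- Let C be the indiscrete category on two objects (two objects, with exactly one morphism between any ordered pair of objects; in particular the two objects are connected by a unique isomorphism). Let Q_C be the coequalizer in Cat of the pair of functors d0, d1 : ∐_{σ} 1 ⇉ C indexed by the isomorphisms of C, where d0 and d1 pick the domain and codomain of each isomorphism. Then Q_C is isomorphic, as a category, to the one-object category associated with the group of integers (ℤ, +); in particular, the skeletal reflection of C is not equivalent to the terminal category. -/

import Mathlib

open CategoryTheory Limits

/-- The indiscrete category on two objects: two objects with exactly one morphism
between any ordered pair of objects. -/
def TwoIndiscrete : Type := Bool

instance : Category.{0} TwoIndiscrete where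
  Hom _ _ := PUnit
  id _ := PUnit.unit
  comp _ _ := PUnit.unit

/-- The set of isomorphisms of `C`, used to index a copower of the terminal category:
this coproduct of copies of the terminal category `1` is the discrete category on the
set of isomorphisms of `C`. -/
def IsoIndex (C : Type) [Category.{0} C] : Type := Σ X Y : C, X ≅ Y

/-- The functor `d0` sending the object of the copy of `1` indexed by an isomorphism
`σ` of `C` to the domain of `σ`. -/
def isoDom (C : Type) [Category.{0} C] :
    Cat.of (Discrete (IsoIndex C)) ⟶ Cat.of C :=
  (Discrete.functor (C := C) fun σ : IsoIndex C => σ.1).toCatHom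

/-- The functor `d1` sending the object of the copy of `1` indexed by an isomorphism
`σ` of `C` to the codomain of `σ`. -/
def isoCod (C : Type) [Category.{0} C] :
    Cat.of (Discrete (IsoIndex C)) ⟶ Cat.of C :=
  (Discrete.functor (C := C) fun σ : IsoIndex C => σ.2.1).toCatHom

namespace TwoIndHelper

noncomputable section

abbrev M := Multiplicative ℤ

def o0 : TwoIndiscrete := false
def o1 : TwoIndiscrete := true

def val : TwoIndiscrete → Multiplicative ℤ :=
  fun b => Bool.rec (Multiplicative.ofAdd 0) (Multiplicative.ofAdd 1) b

lemma val_o0 : val o0 = Multiplicative.ofAdd 0 := rfl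
lemma val_o1 : val o1 = Multiplicative.ofAdd 1 := rfl

/-- The projection functor. -/
def proj : TwoIndiscrete ⥤ SingleObj M :=
  SingleObj.differenceFunctor val

def projHom : Cat.of TwoIndiscrete ⟶ Cat.of (SingleObj M) := proj.toCatHom

lemma proj_map {X Y : TwoIndiscrete} (f : X ⟶ Y) : proj.map f = val Y * (val X)⁻¹ := rfl

lemma two_cases (X : TwoIndiscrete) : X = o0 ∨ X = o1 :=
  (Bool.eq_false_or_eq_true X).symm

lemma mor_eq {X Y : TwoIndiscrete} (f g : X ⟶ Y) : f = g := rfl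

def fmor : o0 ⟶ o1 := ⟨⟩
def gmor : o1 ⟶ o0 := ⟨⟩

def ftIso : o0 ≅ o1 := ⟨fmor, gmor, rfl, rfl⟩

def isoDomF : Discrete (IsoIndex TwoIndiscrete) ⥤ TwoIndiscrete :=
  Discrete.functor fun σ => σ.1

def isoCodF : Discrete (IsoIndex TwoIndiscrete) ⥤ TwoIndiscrete :=
  Discrete.functor fun σ => σ.2.1

lemma proj_cond_fun : isoDomF ⋙ proj = isoCodF ⋙ proj := by
  have h_obj : ∀ X : Discrete (IsoIndex TwoIndiscrete),
      (isoDomF ⋙ proj).obj X = (isoCodF ⋙ proj).obj X := fun _ => rfl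
  refine CategoryTheory.Functor.ext h_obj ?_
  rintro ⟨X⟩ ⟨Y⟩ f
  obtain rfl : X = Y := f.down.down
  have hf : f = 𝟙 (Discrete.mk X) := Subsingleton.elim _ _
  rw [hf]
  simp

lemma proj_cond : isoDom TwoIndiscrete ≫ projHom = isoCod TwoIndiscrete ≫ projHom :=
  congrArg Functor.toCatHom proj_cond_fun

def myCofork : Cofork (isoDom TwoIndiscrete) (isoCod TwoIndiscrete) :=
  Cofork.ofπ projHom proj_cond

section Desc
variable {D : Type} [Category.{0} D] (G : TwoIndiscrete ⥤ D)
  (hG : G.obj o0 = G.obj o1)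

/-- The automorphism of `G.obj o0` induced by the connecting morphism. -/
def gen : Aut (G.obj o0) where
  hom := G.map fmor ≫ eqToHom hG.symm
  inv := eqToHom hG ≫ G.map gmor
  hom_inv_id := by
    rw [Category.assoc, eqToHom_trans_assoc, eqToHom_refl, Category.id_comp,
      ← G.map_comp]
    exact G.map_id o0
  inv_hom_id := by
    rw [Category.assoc, ← G.map_comp_assoc]
    have h1 : (gmor ≫ fmor) = 𝟙 o1 := rfl
    rw [h1, G.map_id, Category.id_comp, eqToHom_trans, eqToHom_refl]

/-- Descended functor. -/
def descF : SingleObj M ⥤ D :=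
  SingleObj.functor ((Aut.toEnd (G.obj o0)).comp (zpowersHom (Aut (G.obj o0)) (gen G hG)))

lemma descF_map (n : M) : (descF G hG).map (X := SingleObj.star M) (Y := SingleObj.star M) n = ((gen G hG) ^ Multiplicative.toAdd n).hom := rfl

lemma desc_fac : proj ⋙ descF G hG = G := by
  have h_obj : ∀ X : TwoIndiscrete, (proj ⋙ descF G hG).obj X = G.obj X := by
    intro X
    rcases two_cases X with rfl | rfl
    · rfl
    · exact hG
  refine CategoryTheory.Functor.ext h_obj ?_
  intro X Y f
  show (descF G hG).map (proj.map f) = eqToHom _ ≫ G.map f ≫ eqToHom _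
  rw [descF_map, proj_map]
  rcases two_cases X with rfl | rfl <;> rcases two_cases Y with rfl | rfl
  · rw [mul_inv_cancel]
    show ((gen G hG) ^ (0 : ℤ)).hom = _
    rw [zpow_zero, mor_eq f (𝟙 _), G.map_id]
    simp
    rfl
  · rw [val_o1, val_o0]
    show ((gen G hG) ^ ((1 : ℤ) + -0)).hom = _
    norm_num
    rw [mor_eq f fmor]
    simp [gen]
    erw [eqToHom_refl, Category.id_comp]
    rfl
  · rw [val_o1, val_o0]
    show ((gen G hG) ^ ((0 : ℤ) + -1)).hom = _
    norm_num
    rw [Aut.Aut_inv_def, mor_eq f gmor]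
    simp [gen]
    erw [eqToHom_refl, Category.comp_id]
    rfl
  · rw [mul_inv_cancel]
    show ((gen G hG) ^ (0 : ℤ)).hom = _
    rw [zpow_zero, mor_eq f (𝟙 _), G.map_id]
    simp
    rfl

end Desc

/-- Extensionality for functors out of `SingleObj M`. -/
lemma singleObj_ext {D : Type} [Category.{0} D] (F₁ F₂ : SingleObj M ⥤ D)
    (h : F₁.obj (SingleObj.star M) = F₂.obj (SingleObj.star M))
    (hmap : F₁.map (X := SingleObj.star M) (Y := SingleObj.star M)
        (Multiplicative.ofAdd (1 : ℤ)) =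
      eqToHom h ≫ F₂.map (X := SingleObj.star M) (Y := SingleObj.star M)
        (Multiplicative.ofAdd (1 : ℤ)) ≫ eqToHom h.symm) : F₁ = F₂ := by
  have key : ∀ n : M, F₁.map n = eqToHom h ≫ F₂.map n ≫ eqToHom h.symm := by
    let φ₁ : M →* End (F₁.obj (SingleObj.star M)) :=
      { toFun := fun n => F₁.map n
        map_one' := F₁.map_id _
        map_mul' := fun x y =>
          (F₁.map_comp (X := SingleObj.star M) (Y := SingleObj.star M)
            (Z := SingleObj.star M) y x : F₁.map (x * y) = F₁.map y ≫ F₁.map x) }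
    let φ₂ : M →* End (F₁.obj (SingleObj.star M)) :=
      { toFun := fun n => eqToHom h ≫ F₂.map n ≫ eqToHom h.symm
        map_one' := by
          show eqToHom h ≫ F₂.map (1 : M) ≫ eqToHom h.symm = 𝟙 _
          rw [show F₂.map (1 : M) = 𝟙 (F₂.obj (SingleObj.star M)) from F₂.map_id _]
          show eqToHom h ≫ 𝟙 _ ≫ eqToHom h.symm = 𝟙 _
          simp
        map_mul' := by
          intro x y
          show eqToHom h ≫ F₂.map (x * y) ≫ eqToHom h.symm = _
          rw [show F₂.map (x * y) = F₂.map y ≫ F₂.map x from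
            F₂.map_comp (X := SingleObj.star M) (Y := SingleObj.star M)
              (Z := SingleObj.star M) y x]
          show _ = (eqToHom h ≫ F₂.map y ≫ eqToHom h.symm) ≫
            (eqToHom h ≫ F₂.map x ≫ eqToHom h.symm)
          simp }
    have hmap' : φ₁ (Multiplicative.ofAdd (1 : ℤ)) = φ₂ (Multiplicative.ofAdd (1 : ℤ)) := by
      simp only [φ₁, φ₂, MonoidHom.coe_mk, OneHom.coe_mk]
      exact hmap
    have hφ : φ₁ = φ₂ := MonoidHom.ext_mint hmap'
    exact fun n => DFunLike.congr_fun hφ n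
  exact CategoryTheory.Functor.ext (fun _ => h) (fun X Y f => key f)

end

end TwoIndHelper

open TwoIndHelper in
/-- Let `C` be the indiscrete category on two objects and let `Q_C = c.pt` be the
coequalizer in `Cat` of `d0, d1 : ∐_σ 1 ⇉ C` indexed by the isomorphisms of `C`.
Then `Q_C` is isomorphic, as a category, to the one-object category associated with
the group `(ℤ, +)`; in particular this skeletal reflection of `C` is not equivalent to
the terminal category. -/
theorem skeletal_reflection_of_two_indiscrete (c : Cofork (isoDom TwoIndiscrete)
    (isoCod TwoIndiscrete)) (hc : IsColimit c) :
    Nonempty (c.pt ≅ Cat.of (SingleObj (Multiplicative ℤ))) ∧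
      ¬ Nonempty ((c.pt : Type) ≌ Discrete PUnit) := by
  have hGob : ∀ s : Cofork (isoDom TwoIndiscrete) (isoCod TwoIndiscrete),
      s.π.toFunctor.obj o0 = s.π.toFunctor.obj o1 := by
    intro s
    exact congrArg (fun F : Cat.of (Discrete (IsoIndex TwoIndiscrete)) ⟶ s.pt =>
      F.toFunctor.obj ⟨(⟨o0, o1, ftIso⟩ : IsoIndex TwoIndiscrete)⟩) s.condition
  have myColim : IsColimit myCofork := by
    refine Cofork.IsColimit.mk _
      (fun s => (descF s.π.toFunctor (hGob s)).toCatHom)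
      (fun s => ?_) (fun s m hm => ?_)
    · exact congrArg Functor.toCatHom <| desc_fac s.π.toFunctor (hGob s)
    · have mF : SingleObj M ⥤ s.pt := m.toFunctor
      have hm' : proj ⋙ m.toFunctor = s.π.toFunctor := congrArg Cat.Hom.toFunctor hm
      have e : m.toFunctor.obj (SingleObj.star M)
          = s.π.toFunctor.obj o0 :=
        congrArg (fun F : TwoIndiscrete ⥤ s.pt => F.obj o0) hm'
      refine congrArg Functor.toCatHom (singleObj_ext m.toFunctor
        (descF s.π.toFunctor (hGob s)) e ?_ :
          m.toFunctor = descF _ (hGob s))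
      have h1 := Functor.congr_hom hm' fmor
      have hpf : proj.map fmor = (Multiplicative.ofAdd (1 : ℤ) : M) := by
        rw [proj_map, val_o1, val_o0]
        norm_num
      have h2 : (proj ⋙ m.toFunctor).map fmor
          = m.toFunctor.map (X := SingleObj.star M) (Y := SingleObj.star M)
            ((Multiplicative.ofAdd (1 : ℤ) : M)) := by
        show m.toFunctor.map (proj.map fmor) = _
        rw [hpf]
      rw [h2] at h1
      refine h1.trans ?_
      erw [descF_map]
      show eqToHom _ ≫ s.π.toFunctor.map fmor ≫ eqToHom _ =
        eqToHom e ≫ ((gen s.π.toFunctor (hGob s)) ^ (1:ℤ)).hom ≫ eqToHom e.symm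
      rw [zpow_one]
      simp [gen]
  have iso : c.pt ≅ Cat.of (SingleObj (Multiplicative ℤ)) :=
    hc.coconePointUniqueUpToIso myColim
  refine ⟨⟨iso⟩, ?_⟩
  rintro ⟨E⟩
  have E2 : SingleObj M ≌ Discrete PUnit := (Cat.equivOfIso iso).symm.trans E
  have hEq : (Multiplicative.ofAdd (0 : ℤ) : M) = Multiplicative.ofAdd 1 :=
    E2.functor.map_injective (X := SingleObj.star M) (Y := SingleObj.star M)
      (Subsingleton.elim _ _)
  exact absurd hEq (by decide)
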